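/- Let U ⊆ ℝ³ be open, let a > 0 and γ > 1, and let ρ, ρ_s : U → ℝ be differentiable with ρ > 0 and ρ_s > 0 on U. Define G(ρ,ρ_s) := (a/(γ−1)) · (ρ^γ + (γ−1)ρ_s^γ − γ ρ_s^{γ−1} ρ). Then at every point of U, ρ_s^{−1} (∇(ρ^γ − ρ_s^γ) − γ(ρ − ρ_s) ρ_s^{γ−2} ∇ρ_s) = ∇(ρ_s^{−1}(ρ^γ − ρ_s^γ)) − ((γ−1)/a) · G(ρ,ρ_s) · ∇(ρ_s^{−1}). -/

import Mathlib

/-- `j`-th partial derivative of a scalar function on ℝ³. -/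
noncomputable def pd (j : Fin 3) (f : (Fin 3 → ℝ) → ℝ) (x : Fin 3 → ℝ) : ℝ :=
  fderiv ℝ f x (Pi.single j 1)

/-- The identity (1.27) of the paper, the key algebraic tool for handling large
potential forces. -/
theorem large_force_gradient_identity
    (U : Set (Fin 3 → ℝ)) (hU : IsOpen U)
    (a γ : ℝ) (ha : 0 < a) (hγ : 1 < γ)
    (ρ ρs : (Fin 3 → ℝ) → ℝ)
    (hρ : ∀ x ∈ U, DifferentiableAt ℝ ρ x) (hρs : ∀ x ∈ U, DifferentiableAt ℝ ρs x)
    (hρpos : ∀ x ∈ U, 0 < ρ x) (hρspos : ∀ x ∈ U, 0 < ρs x)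
    (G : ℝ → ℝ → ℝ)
    (hG : G = fun r s => a / (γ - 1) * (r ^ γ + (γ - 1) * s ^ γ - γ * s ^ (γ - 1) * r)) :
    ∀ x ∈ U,
      (ρs x)⁻¹ • ((fun j => pd j (fun y => ρ y ^ γ - ρs y ^ γ) x)
            - (γ * (ρ x - ρs x) * ρs x ^ (γ - 2)) • (fun j => pd j ρs x))
        = (fun j => pd j (fun y => (ρs y)⁻¹ * (ρ y ^ γ - ρs y ^ γ)) x)
            - ((γ - 1) / a * G (ρ x) (ρs x)) • (fun j => pd j (fun y => (ρs y)⁻¹) x) := by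
  intro x hx
  have hspos := hρspos x hx
  have hsx : ρs x ≠ 0 := hspos.ne'
  have hρd := hρ x hx
  have hsd := hρs x hx
  have hFd : DifferentiableAt ℝ (fun y => ρ y ^ γ - ρs y ^ γ) x :=
    (hρd.rpow_const (Or.inl (hρpos x hx).ne')).sub (hsd.rpow_const (Or.inl hsx))
  have hinvF : HasFDerivAt (fun y => (ρs y)⁻¹) ((-(ρs x ^ 2)⁻¹) • fderiv ℝ ρs x) x :=
    (hasDerivAt_inv hsx).comp_hasFDerivAt x hsd.hasFDerivAt
  have hinvd : DifferentiableAt ℝ (fun y => (ρs y)⁻¹) x := hinvF.differentiableAt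
  funext j
  have hinv : pd j (fun y => (ρs y)⁻¹) x = -(ρs x ^ 2)⁻¹ * pd j ρs x := by
    simp [pd, hinvF.fderiv]
  have hprod : pd j (fun y => (ρs y)⁻¹ * (ρ y ^ γ - ρs y ^ γ)) x
      = (ρs x)⁻¹ * pd j (fun y => ρ y ^ γ - ρs y ^ γ) x
        + (ρ x ^ γ - ρs x ^ γ) * pd j (fun y => (ρs y)⁻¹) x := by
    simp only [pd, fderiv_fun_mul hinvd hFd]
    simp [mul_comm]
  simp only [Pi.smul_apply, Pi.sub_apply, smul_eq_mul]
  rw [hprod, hinv, hG]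
  beta_reduce
  have h1 : ρs x ^ (γ - 1) = ρs x ^ γ / ρs x := by
    rw [Real.rpow_sub hspos, Real.rpow_one]
  have h2 : ρs x ^ (γ - 2) = ρs x ^ γ / ρs x ^ 2 := by
    rw [Real.rpow_sub hspos, show ((2:ℝ) = ((2:ℕ):ℝ)) by norm_num, Real.rpow_natCast]
  rw [h1, h2]
  have hγ1 : γ - 1 ≠ 0 := sub_ne_zero.mpr hγ.ne'
  field_simp
  ring
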